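/- For positive semidefinite real symmetric matrices x and y, one has tr(√(√x · y · √x)) ≤ √(tr x · tr y) ≤ (tr x + tr y)/2. -/

import Mathlib

namespace Matrix.PosSemidef

open scoped ComplexOrder

/-- The positive semidefinite square root of a positive semidefinite matrix
(the definition Mathlib had in December 2024, since removed). -/
noncomputable def sqrt {n : Type*} {𝕜 : Type*} [Fintype n] [RCLike 𝕜] [DecidableEq n]
    {A : Matrix n n 𝕜} (hA : A.PosSemidef) : Matrix n n 𝕜 :=
  hA.1.eigenvectorUnitary.1 * Matrix.diagonal ((↑) ∘ (√·) ∘ hA.1.eigenvalues) *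
    (star hA.1.eigenvectorUnitary : Matrix n n 𝕜)

lemma posSemidef_sqrt {n : Type*} {𝕜 : Type*} [Fintype n] [RCLike 𝕜] [DecidableEq n]
    {A : Matrix n n 𝕜} (hA : A.PosSemidef) : hA.sqrt.PosSemidef := by
  have hd : (Matrix.diagonal ((↑) ∘ (√·) ∘ hA.1.eigenvalues : n → 𝕜)).PosSemidef :=
    PosSemidef.diagonal fun i => by
      simpa using (RCLike.ofReal_nonneg (K := 𝕜)).mpr (Real.sqrt_nonneg (hA.1.eigenvalues i))
  have := hd.mul_mul_conjTranspose_same (hA.1.eigenvectorUnitary : Matrix n n 𝕜)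
  unfold sqrt
  rw [Matrix.star_eq_conjTranspose]
  exact this

lemma sqrt_mul_self {n : Type*} {𝕜 : Type*} [Fintype n] [RCLike 𝕜] [DecidableEq n]
    {A : Matrix n n 𝕜} (hA : A.PosSemidef) : hA.sqrt * hA.sqrt = A := by
  have hU : (star hA.1.eigenvectorUnitary : Matrix n n 𝕜) * hA.1.eigenvectorUnitary.1 = 1 :=
    Unitary.coe_star_mul_self _
  unfold sqrt
  simp only [mul_assoc]
  rw [← mul_assoc (star _ : Matrix n n 𝕜) _ _, hU, one_mul, ← mul_assoc (Matrix.diagonal _),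
    Matrix.diagonal_mul_diagonal]
  conv_rhs => rw [hA.1.spectral_theorem, Unitary.conjStarAlgAut_apply]
  rw [mul_assoc]
  congr 3
  funext i
  simp only [Function.comp_apply]
  rw [← RCLike.ofReal_mul, Real.mul_self_sqrt (hA.eigenvalues_nonneg i)]

end Matrix.PosSemidef

open Finset in
private lemma cs_sqrt {ι : Type*} (s : Finset ι) (f g : ι → ℝ) :
    ∑ i ∈ s, f i * g i ≤
      Real.sqrt (∑ i ∈ s, f i ^ 2) * Real.sqrt (∑ i ∈ s, g i ^ 2) := by
  have h := Finset.sum_mul_sq_le_sq_mul_sq s f g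
  calc ∑ i ∈ s, f i * g i ≤ |∑ i ∈ s, f i * g i| := le_abs_self _
    _ = Real.sqrt ((∑ i ∈ s, f i * g i) ^ 2) := (Real.sqrt_sq_eq_abs _).symm
    _ ≤ Real.sqrt ((∑ i ∈ s, f i ^ 2) * ∑ i ∈ s, g i ^ 2) := Real.sqrt_le_sqrt h
    _ = _ := Real.sqrt_mul (by positivity) _


open Finset in
/-- Bessel-type inequality for an "orthonormal-or-small" family. -/
private lemma bessel {n : ℕ} (v : Fin n → Fin n → ℝ)
    (horth : ∀ i i', i ≠ i' → ∑ j, v i j * v i' j = 0)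
    (hnorm : ∀ i, ∑ j, v i j ^ 2 ≤ 1) (c : Fin n → ℝ) :
    ∑ i, (∑ j, c j * v i j) ^ 2 ≤ ∑ j, c j ^ 2 := by
  obtain ⟨t, ht⟩ : ∃ t : Fin n → ℝ, ∀ i, t i = ∑ j, c j * v i j := ⟨_, fun _ => rfl⟩
  obtain ⟨S, hS⟩ : ∃ S : Fin n → ℝ, ∀ j, S j = ∑ i, t i * v i j := ⟨_, fun _ => rfl⟩
  have goal_eq : ∑ i, (∑ j, c j * v i j) ^ 2 = ∑ i, t i ^ 2 := by
    exact Finset.sum_congr rfl fun i _ => by rw [ht]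
  rw [goal_eq]
  have h1 : ∑ j, c j * S j = ∑ i, t i ^ 2 := by
    calc ∑ j, c j * S j = ∑ j, ∑ i, t i * (c j * v i j) := by
          refine Finset.sum_congr rfl fun j _ => ?_
          rw [hS, Finset.mul_sum]
          exact Finset.sum_congr rfl fun i _ => by ring
      _ = ∑ i, ∑ j, t i * (c j * v i j) := Finset.sum_comm
      _ = ∑ i, t i ^ 2 := by
          refine Finset.sum_congr rfl fun i _ => ?_
          rw [← Finset.mul_sum, ← ht, sq]
  have h2 : ∑ j, S j ^ 2 ≤ ∑ i, t i ^ 2 := by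
    have e1 : ∑ j, S j ^ 2 = ∑ i, ∑ i', t i * t i' * ∑ j, v i j * v i' j := by
      calc ∑ j, S j ^ 2 = ∑ j, ∑ i, ∑ i', t i * t i' * (v i j * v i' j) := by
            refine Finset.sum_congr rfl fun j _ => ?_
            rw [hS, sq, Finset.sum_mul_sum]
            exact Finset.sum_congr rfl fun i _ => Finset.sum_congr rfl fun i' _ => by ring
        _ = ∑ i, ∑ j, ∑ i', t i * t i' * (v i j * v i' j) := Finset.sum_comm
        _ = ∑ i, ∑ i', ∑ j, t i * t i' * (v i j * v i' j) :=
            Finset.sum_congr rfl fun i _ => Finset.sum_comm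
        _ = ∑ i, ∑ i', t i * t i' * ∑ j, v i j * v i' j := by
            refine Finset.sum_congr rfl fun i _ => Finset.sum_congr rfl fun i' _ => ?_
            rw [Finset.mul_sum]
    rw [e1]
    have e2 : ∀ i : Fin n, ∑ i', t i * t i' * ∑ j, v i j * v i' j
        = t i ^ 2 * ∑ j, v i j ^ 2 := by
      intro i
      rw [Finset.sum_eq_single i]
      · rw [sq]
        congr 1
        exact Finset.sum_congr rfl fun j _ => (sq (v i j)).symm
      · intro i' _ hne
        rw [horth i i' (Ne.symm hne), mul_zero]
      · simp
    calc ∑ i, ∑ i', t i * t i' * ∑ j, v i j * v i' j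
        = ∑ i, t i ^ 2 * ∑ j, v i j ^ 2 := Finset.sum_congr rfl fun i _ => e2 i
      _ ≤ ∑ i, t i ^ 2 * 1 := by
          refine Finset.sum_le_sum fun i _ => ?_
          exact mul_le_mul_of_nonneg_left (hnorm i) (sq_nonneg _)
      _ = ∑ i, t i ^ 2 := by simp
  have h0 : (0:ℝ) ≤ ∑ j, (c j - S j) ^ 2 := Finset.sum_nonneg fun j _ => sq_nonneg _
  have hexp : ∑ j, (c j - S j) ^ 2
      = ∑ j, c j ^ 2 - 2 * ∑ j, c j * S j + ∑ j, S j ^ 2 := by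
    have h : ∀ j : Fin n, (c j - S j) ^ 2 = c j ^ 2 - 2 * (c j * S j) + S j ^ 2 := fun j => by ring
    rw [Finset.sum_congr rfl fun j _ => h j, Finset.sum_add_distrib, Finset.sum_sub_distrib,
      ← Finset.mul_sum]
  rw [h1] at hexp
  linarith

/-- For positive semidefinite real symmetric matrices `x, y`:
`tr √(√x · y · √x) ≤ √(tr x · tr y) ≤ (tr x + tr y)/2`. -/
theorem trace_sqrt_conj_le {r : ℕ} (x y : Matrix (Fin r) (Fin r) ℝ)
    (hx : x.PosSemidef) (hy : y.PosSemidef)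
    (z : Matrix (Fin r) (Fin r) ℝ) (hz : z.PosSemidef)
    (hzdef : z = hx.sqrt * y * hx.sqrt) :
    hz.sqrt.trace ≤ Real.sqrt (x.trace * y.trace) ∧
      Real.sqrt (x.trace * y.trace) ≤ (x.trace + y.trace) / 2 := by
  classical
  have hzH : z.IsHermitian := hz.1
  set μ : Fin r → ℝ := hzH.eigenvalues with hμdef
  have hμ0 : ∀ i, 0 ≤ μ i := hz.eigenvalues_nonneg
  set Q : Matrix (Fin r) (Fin r) ℝ := (hzH.eigenvectorUnitary : Matrix (Fin r) (Fin r) ℝ)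
    with hQdef
  have hQU : star Q * Q = 1 :=
    Matrix.mem_unitaryGroup_iff'.mp (hzH.eigenvectorUnitary).2
  have hQQ : Q * star Q = 1 :=
    Matrix.mem_unitaryGroup_iff.mp (hzH.eigenvectorUnitary).2
  have hdiag : star Q * z * Q = Matrix.diagonal μ := by
    have := hzH.conjStarAlgAut_star_eigenvectorUnitary
    rw [Unitary.conjStarAlgAut_star_apply] at this
    simpa [RCLike.ofReal_real_eq_id] using this
  -- trace of the square root
  have htr : hz.sqrt.trace = ∑ i, Real.sqrt (μ i) := by
    have hs : hz.sqrt = Q * Matrix.diagonal (Real.sqrt ∘ μ) * star Q := by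
      simp only [Matrix.PosSemidef.sqrt, hQdef, hμdef]
      congr 1
    rw [hs, Matrix.trace_mul_cycle, hQU, one_mul, Matrix.trace_diagonal]
    rfl
  -- square roots of x and y
  set a : Matrix (Fin r) (Fin r) ℝ := hx.sqrt with hadef
  set b : Matrix (Fin r) (Fin r) ℝ := hy.sqrt with hbdef
  have ha : a * a = x := hx.sqrt_mul_self
  have hb : b * b = y := hy.sqrt_mul_self
  have has : star a = a := by
    rw [Matrix.star_eq_conjTranspose]; exact hx.posSemidef_sqrt.1
  have hbs : star b = b := by
    rw [Matrix.star_eq_conjTranspose]; exact hy.posSemidef_sqrt.1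
  set B : Matrix (Fin r) (Fin r) ℝ := star Q * (a * b) with hBdef
  have habba : a * b * (b * a) = z := by
    rw [hzdef, ← hb]; noncomm_ring
  have hBB : B * star B = Matrix.diagonal μ := by
    have hstarB : star B = b * a * Q := by
      rw [hBdef, star_mul, star_star, star_mul, has, hbs]
    rw [hBdef, hstarB, ← hdiag]
    calc star Q * (a * b) * (b * a * Q) = star Q * (a * b * (b * a)) * Q := by noncomm_ring
      _ = star Q * z * Q := by rw [habba]
  have hBBentry : ∀ i i', ∑ j, B i j * B i' j = if i = i' then μ i else 0 := by
    intro i i'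
    have h := congrArg (fun M : Matrix (Fin r) (Fin r) ℝ => M i i') hBB
    simpa [Matrix.mul_apply, Matrix.star_apply, Matrix.diagonal_apply] using h
  -- the orthonormal-ish family v
  set v : Fin r → Fin r → ℝ :=
    fun i j => if μ i = 0 then 0 else B i j / Real.sqrt (μ i) with hvdef
  have hBsq : ∀ i, ∑ j, B i j ^ 2 = μ i := by
    intro i
    have h := hBBentry i i
    rw [if_pos rfl] at h
    simpa [sq] using h
  have hnorm : ∀ i, ∑ j, v i j ^ 2 ≤ 1 := by
    intro i
    by_cases h : μ i = 0
    · simp [hvdef, h]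
    · have hμpos : 0 < μ i := lt_of_le_of_ne (hμ0 i) (Ne.symm h)
      have hsq : Real.sqrt (μ i) ^ 2 = μ i := Real.sq_sqrt (hμ0 i)
      simp only [hvdef, if_neg h, div_pow]
      rw [← Finset.sum_div, hBsq i, hsq, div_self (ne_of_gt hμpos)]
  have horth : ∀ i i', i ≠ i' → ∑ j, v i j * v i' j = 0 := by
    intro i i' hne
    by_cases h : μ i = 0
    · simp [hvdef, h]
    · by_cases h' : μ i' = 0
      · simp [hvdef, h']
      · simp only [hvdef, if_neg h, if_neg h', div_mul_div_comm]
        rw [← Finset.sum_div, hBBentry i i', if_neg hne, zero_div]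
  have hBv : ∀ i, ∑ j, B i j * v i j = Real.sqrt (μ i) := by
    intro i
    by_cases h : μ i = 0
    · simp [hvdef, h]
    · have hμpos : 0 < μ i := lt_of_le_of_ne (hμ0 i) (Ne.symm h)
      have hsne : Real.sqrt (μ i) ≠ 0 := ne_of_gt (Real.sqrt_pos.mpr hμpos)
      simp only [hvdef, if_neg h, mul_div_assoc']
      rw [← Finset.sum_div]
      have : ∑ j, B i j * B i j = μ i := by simpa [sq] using hBsq i
      rw [this, div_eq_iff hsne]
      exact (Real.mul_self_sqrt (hμ0 i)).symm
  -- rewrite B entries via M = a * Q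
  set M : Matrix (Fin r) (Fin r) ℝ := a * Q with hMdef
  have hsM : star M = star Q * a := by rw [hMdef, star_mul, has]
  have hBalt : ∀ i j, B i j = ∑ l, M l i * b l j := by
    intro i j
    have hB2 : B = star M * b := by rw [hBdef, hsM, mul_assoc]
    rw [hB2, Matrix.mul_apply]
    exact Finset.sum_congr rfl fun l _ => by
      rw [Matrix.star_apply, star_trivial]
  set w : Fin r → Fin r → ℝ := fun i l => ∑ j, b l j * v i j with hwdef
  have key : ∀ i, Real.sqrt (μ i) = ∑ l, M l i * w i l := by
    intro i
    rw [← hBv i]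
    calc ∑ j, B i j * v i j = ∑ j, ∑ l, M l i * (b l j * v i j) := by
          refine Finset.sum_congr rfl fun j _ => ?_
          rw [hBalt i j, Finset.sum_mul]
          exact Finset.sum_congr rfl fun l _ => by ring
      _ = ∑ l, ∑ j, M l i * (b l j * v i j) := Finset.sum_comm
      _ = ∑ l, M l i * w i l := by
          refine Finset.sum_congr rfl fun l _ => ?_
          rw [← Finset.mul_sum, hwdef]
  set P : Fin r → ℝ := fun i => ∑ l, M l i ^ 2 with hPdef
  set W : Fin r → ℝ := fun i => ∑ l, w i l ^ 2 with hWdef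
  have hPnn : ∀ i, 0 ≤ P i := fun i => Finset.sum_nonneg fun l _ => sq_nonneg _
  have hWnn : ∀ i, 0 ≤ W i := fun i => Finset.sum_nonneg fun l _ => sq_nonneg _
  -- sum of P is trace x
  have hMM : M * star M = x := by
    rw [hMdef, hsM, mul_assoc, ← mul_assoc Q, hQQ, one_mul, ha]
  have htrx : ∀ (u : Matrix (Fin r) (Fin r) ℝ), u.trace = ∑ l, u l l := fun u => rfl
  have hPsum : ∑ i, P i = x.trace := by
    rw [htrx x]
    calc ∑ i, P i = ∑ i, ∑ l, M l i ^ 2 := rfl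
      _ = ∑ l, ∑ i, M l i ^ 2 := Finset.sum_comm
      _ = ∑ l, x l l := by
          refine Finset.sum_congr rfl fun l _ => ?_
          rw [← hMM, Matrix.mul_apply]
          exact Finset.sum_congr rfl fun i _ => by
            rw [Matrix.star_apply, star_trivial, sq]
  -- sum of W is at most trace y
  have hbb : b * star b = y := by rw [hbs, hb]
  have hWsum : ∑ i, W i ≤ y.trace := by
    rw [htrx y]
    calc ∑ i, W i = ∑ i, ∑ l, w i l ^ 2 := rfl
      _ = ∑ l, ∑ i, w i l ^ 2 := Finset.sum_comm
      _ ≤ ∑ l, ∑ j, b l j ^ 2 := by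
          refine Finset.sum_le_sum fun l _ => ?_
          exact bessel v horth hnorm (fun j => b l j)
      _ = ∑ l, y l l := by
          refine Finset.sum_congr rfl fun l _ => ?_
          rw [← hbb, Matrix.mul_apply]
          exact Finset.sum_congr rfl fun j _ => by
            rw [Matrix.star_apply, star_trivial, sq]
  have htrxnn : 0 ≤ x.trace := hPsum ▸ Finset.sum_nonneg fun i _ => hPnn i
  have htrynn : 0 ≤ y.trace :=
    le_trans (Finset.sum_nonneg fun i _ => hWnn i) hWsum
  constructor
  · -- main inequality
    calc hz.sqrt.trace = ∑ i, Real.sqrt (μ i) := htr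
      _ = ∑ i, ∑ l, M l i * w i l := Finset.sum_congr rfl fun i _ => key i
      _ ≤ ∑ i, Real.sqrt (P i) * Real.sqrt (W i) :=
          Finset.sum_le_sum fun i _ => cs_sqrt Finset.univ _ _
      _ ≤ Real.sqrt (∑ i, Real.sqrt (P i) ^ 2) * Real.sqrt (∑ i, Real.sqrt (W i) ^ 2) :=
          cs_sqrt Finset.univ _ _
      _ = Real.sqrt (∑ i, P i) * Real.sqrt (∑ i, W i) := by
          rw [Finset.sum_congr rfl fun i _ => Real.sq_sqrt (hPnn i),
            Finset.sum_congr rfl fun i _ => Real.sq_sqrt (hWnn i)]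
      _ ≤ Real.sqrt (x.trace) * Real.sqrt (y.trace) := by
          rw [hPsum]
          exact mul_le_mul_of_nonneg_left (Real.sqrt_le_sqrt hWsum) (Real.sqrt_nonneg _)
      _ = Real.sqrt (x.trace * y.trace) := (Real.sqrt_mul htrxnn _).symm
  · -- AM-GM
    calc Real.sqrt (x.trace * y.trace) ≤ Real.sqrt (((x.trace + y.trace) / 2) ^ 2) :=
          Real.sqrt_le_sqrt (by nlinarith [sq_nonneg (x.trace - y.trace)])
      _ = (x.trace + y.trace) / 2 := Real.sqrt_sq (by linarith)
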